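/- For all real x with 0 < x < π/2, 2 + (2/45 − (2/315)x^2 − α·x^4)·x^3·tan x < (x/sin x)^2 + x/tan x < 2 + (2/45 − (2/315)x^2 − β·x^4)·x^3·tan x, where α = (224 − 8π^2)/(315π^4) and β = 4/1575. -/

import Mathlib

set_option maxHeartbeats 4000000
open Real

namespace W17

lemma hd (n : ℕ) (c t : ℝ) : HasDerivAt (fun x : ℝ => x ^ n / c) ((n : ℝ) * t ^ (n - 1) / c) t :=
  (hasDerivAt_pow n t).div_const c

lemma step {f g f' g' : ℝ → ℝ} (hf : ∀ t, HasDerivAt f (f' t) t)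
    (hg : ∀ t, HasDerivAt g (g' t) t) (h0 : f 0 ≤ g 0)
    (hle : ∀ t, 0 ≤ t → f' t ≤ g' t) : ∀ x, 0 ≤ x → f x ≤ g x := by
  intro x hx
  have hda : ∀ t, HasDerivAt (fun s => g s - f s) (g' t - f' t) t := fun t => (hg t).sub (hf t)
  have hmono : MonotoneOn (fun s => g s - f s) (Set.Ici 0) := by
    refine monotoneOn_of_deriv_nonneg (convex_Ici 0) ?_ ?_ ?_
    · exact (Differentiable.continuous (fun t => (hda t).differentiableAt)).continuousOn
    · exact fun t _ => ((hda t).differentiableAt).differentiableWithinAt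
    · intro t ht
      rw [(hda t).deriv]
      have ht' : (0:ℝ) < t := by simpa [interior_Ici] using ht
      linarith [hle t ht'.le]
  have h2 := hmono Set.self_mem_Ici (Set.mem_Ici.2 hx) hx
  simp only at h2
  linarith

lemma sin_ge_S3 : ∀ x : ℝ, 0 ≤ x → x - x^3/6 ≤ sin x := by
  have hpoly : ∀ t : ℝ, HasDerivAt (fun x : ℝ => x - x^3/6) (1 - t^2/2) t := by
    intro t
    have h := (hasDerivAt_id t).sub (hd 3 6 t)
    refine h.congr_deriv ?_
    push_cast; ring
  refine step hpoly (fun t => Real.hasDerivAt_sin t) (by norm_num) ?_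
  intro t _
  linarith [Real.one_sub_sq_div_two_le_cos (x := t)]

lemma cos_le_C4 : ∀ x : ℝ, 0 ≤ x → cos x ≤ 1 - x^2/2 + x^4/24 := by
  have hpoly : ∀ t : ℝ, HasDerivAt (fun x : ℝ => 1 - x^2/2 + x^4/24) (-(t - t^3/6)) t := by
    intro t
    have h := ((hasDerivAt_const t (1:ℝ)).sub (hd 2 2 t)).add (hd 4 24 t)
    refine h.congr_deriv ?_
    push_cast; ring
  refine step (fun t => Real.hasDerivAt_cos t) hpoly (by norm_num) ?_
  intro t ht
  have := sin_ge_S3 t ht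
  linarith

lemma sin_le_S5 : ∀ x : ℝ, 0 ≤ x → sin x ≤ x - x^3/6 + x^5/120 := by
  have hpoly : ∀ t : ℝ, HasDerivAt (fun x : ℝ => x - x^3/6 + x^5/120) (1 - t^2/2 + t^4/24) t := by
    intro t
    have h := ((hasDerivAt_id t).sub (hd 3 6 t)).add (hd 5 120 t)
    refine h.congr_deriv ?_
    push_cast; ring
  refine step (fun t => Real.hasDerivAt_sin t) hpoly (by norm_num) ?_
  intro t ht
  exact cos_le_C4 t ht

lemma cos_ge_C6 : ∀ x : ℝ, 0 ≤ x → 1 - x^2/2 + x^4/24 - x^6/720 ≤ cos x := by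
  have hpoly : ∀ t : ℝ, HasDerivAt (fun x : ℝ => 1 - x^2/2 + x^4/24 - x^6/720)
      (-(t - t^3/6 + t^5/120)) t := by
    intro t
    have h := (((hasDerivAt_const t (1:ℝ)).sub (hd 2 2 t)).add (hd 4 24 t)).sub (hd 6 720 t)
    refine h.congr_deriv ?_
    push_cast; ring
  refine step hpoly (fun t => Real.hasDerivAt_cos t) (by norm_num) ?_
  intro t ht
  have := sin_le_S5 t ht
  linarith

lemma sin_ge_S7 : ∀ x : ℝ, 0 ≤ x → x - x^3/6 + x^5/120 - x^7/5040 ≤ sin x := by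
  have hpoly : ∀ t : ℝ, HasDerivAt (fun x : ℝ => x - x^3/6 + x^5/120 - x^7/5040)
      (1 - t^2/2 + t^4/24 - t^6/720) t := by
    intro t
    have h := (((hasDerivAt_id t).sub (hd 3 6 t)).add (hd 5 120 t)).sub (hd 7 5040 t)
    refine h.congr_deriv ?_
    push_cast; ring
  refine step hpoly (fun t => Real.hasDerivAt_sin t) (by norm_num) ?_
  intro t ht
  exact cos_ge_C6 t ht

lemma cos_le_C8 : ∀ x : ℝ, 0 ≤ x → cos x ≤ 1 - x^2/2 + x^4/24 - x^6/720 + x^8/40320 := by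
  have hpoly : ∀ t : ℝ, HasDerivAt (fun x : ℝ => 1 - x^2/2 + x^4/24 - x^6/720 + x^8/40320)
      (-(t - t^3/6 + t^5/120 - t^7/5040)) t := by
    intro t
    have h := ((((hasDerivAt_const t (1:ℝ)).sub (hd 2 2 t)).add (hd 4 24 t)).sub (hd 6 720 t)).add (hd 8 40320 t)
    refine h.congr_deriv ?_
    push_cast; ring
  refine step (fun t => Real.hasDerivAt_cos t) hpoly (by norm_num) ?_
  intro t ht
  have := sin_ge_S7 t ht
  linarith

lemma sin_le_S9 : ∀ x : ℝ, 0 ≤ x → sin x ≤ x - x^3/6 + x^5/120 - x^7/5040 + x^9/362880 := by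
  have hpoly : ∀ t : ℝ, HasDerivAt (fun x : ℝ => x - x^3/6 + x^5/120 - x^7/5040 + x^9/362880)
      (1 - t^2/2 + t^4/24 - t^6/720 + t^8/40320) t := by
    intro t
    have h := ((((hasDerivAt_id t).sub (hd 3 6 t)).add (hd 5 120 t)).sub (hd 7 5040 t)).add (hd 9 362880 t)
    refine h.congr_deriv ?_
    push_cast; ring
  refine step (fun t => Real.hasDerivAt_sin t) hpoly (by norm_num) ?_
  intro t ht
  exact cos_le_C8 t ht

lemma cos_ge_C10 : ∀ x : ℝ, 0 ≤ x →
    1 - x^2/2 + x^4/24 - x^6/720 + x^8/40320 - x^10/3628800 ≤ cos x := by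
  have hpoly : ∀ t : ℝ, HasDerivAt
      (fun x : ℝ => 1 - x^2/2 + x^4/24 - x^6/720 + x^8/40320 - x^10/3628800)
      (-(t - t^3/6 + t^5/120 - t^7/5040 + t^9/362880)) t := by
    intro t
    have h := (((((hasDerivAt_const t (1:ℝ)).sub (hd 2 2 t)).add (hd 4 24 t)).sub (hd 6 720 t)).add (hd 8 40320 t)).sub (hd 10 3628800 t)
    refine h.congr_deriv ?_
    push_cast; ring
  refine step hpoly (fun t => Real.hasDerivAt_cos t) (by norm_num) ?_
  intro t ht
  have := sin_le_S9 t ht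
  linarith

lemma sin_ge_S11 : ∀ x : ℝ, 0 ≤ x →
    x - x^3/6 + x^5/120 - x^7/5040 + x^9/362880 - x^11/39916800 ≤ sin x := by
  have hpoly : ∀ t : ℝ, HasDerivAt
      (fun x : ℝ => x - x^3/6 + x^5/120 - x^7/5040 + x^9/362880 - x^11/39916800)
      (1 - t^2/2 + t^4/24 - t^6/720 + t^8/40320 - t^10/3628800) t := by
    intro t
    have h := (((((hasDerivAt_id t).sub (hd 3 6 t)).add (hd 5 120 t)).sub (hd 7 5040 t)).add (hd 9 362880 t)).sub (hd 11 39916800 t)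
    refine h.congr_deriv ?_
    push_cast; ring
  refine step hpoly (fun t => Real.hasDerivAt_sin t) (by norm_num) ?_
  intro t ht
  exact cos_ge_C10 t ht

lemma L1 (x : ℝ) (hx0 : 0 < x) (hxU : x ≤ 15708/10000) (hs0 : 0 < sin x) (hc0 : 0 ≤ cos x) :
    x^2*cos x + x*(cos x)^2*sin x - 2*(sin x)^2*cos x
      < (2/45 - 2/315*x^2 - 4/1575*x^4) * x^3 * (sin x)^3 := by
  have hx := hx0.le
  have hS9 := sin_le_S9 x hx
  have hS11 := sin_ge_S11 x hx
  have hC8 := cos_le_C8 x hx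
  have hC10 := cos_ge_C10 x hx
  have key : x^2*(1 - x^2/2 + x^4/24 - x^6/720 + x^8/40320) + x*(1 - x^2/2 + x^4/24 - x^6/720 + x^8/40320)^2*(x - x^3/6 + x^5/120 - x^7/5040 + x^9/362880) - 2*(x - x^3/6 + x^5/120 - x^7/5040 + x^9/362880 - x^11/39916800)^2*(1 - x^2/2 + x^4/24 - x^6/720 + x^8/40320 - x^10/3628800)
      < (2/45 - 2/315*x^2 - 4/1575*x^4) * x^3 * (x - x^3/6 + x^5/120 - x^7/5040 + x^9/362880 - x^11/39916800)^3 ∧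
      ((0:ℝ) ≤ x - x^3/6 + x^5/120 - x^7/5040 + x^9/362880 - x^11/39916800) ∧ ((0:ℝ) ≤ 2/45 - 2/315*x^2 - 4/1575*x^4) := by
    have hu : x^2 ≤ 24675/10000 := by nlinarith
    have huba1 : (x^2)^1 ≤ (987/400) := by
      calc (x^2)^1 ≤ ((987/400))^1 := pow_le_pow_left₀ (sq_nonneg x) (by linarith) 1
        _ = (987/400) := by norm_num
    have hlba1 : (0:ℝ) ≤ (x^2)^1 := by positivity
    have huba2 : (x^2)^2 ≤ (974169/160000) := by
      calc (x^2)^2 ≤ ((987/400))^2 := pow_le_pow_left₀ (sq_nonneg x) (by linarith) 2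
        _ = (974169/160000) := by norm_num
    have hlba2 : (0:ℝ) ≤ (x^2)^2 := by positivity
    have huba3 : (x^2)^3 ≤ (961504803/64000000) := by
      calc (x^2)^3 ≤ ((987/400))^3 := pow_le_pow_left₀ (sq_nonneg x) (by linarith) 3
        _ = (961504803/64000000) := by norm_num
    have hlba3 : (0:ℝ) ≤ (x^2)^3 := by positivity
    have huba4 : (x^2)^4 ≤ (949005240561/25600000000) := by
      calc (x^2)^4 ≤ ((987/400))^4 := pow_le_pow_left₀ (sq_nonneg x) (by linarith) 4
        _ = (949005240561/25600000000) := by norm_num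
    have hlba4 : (0:ℝ) ≤ (x^2)^4 := by positivity
    have huba5 : (x^2)^5 ≤ (936668172433707/10240000000000) := by
      calc (x^2)^5 ≤ ((987/400))^5 := pow_le_pow_left₀ (sq_nonneg x) (by linarith) 5
        _ = (936668172433707/10240000000000) := by norm_num
    have hlba5 : (0:ℝ) ≤ (x^2)^5 := by positivity
    have huba6 : (x^2)^6 ≤ (924491486192068809/4096000000000000) := by
      calc (x^2)^6 ≤ ((987/400))^6 := pow_le_pow_left₀ (sq_nonneg x) (by linarith) 6
        _ = (924491486192068809/4096000000000000) := by norm_num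
    have hlba6 : (0:ℝ) ≤ (x^2)^6 := by positivity
    have huba7 : (x^2)^7 ≤ (912473096871571914483/1638400000000000000) := by
      calc (x^2)^7 ≤ ((987/400))^7 := pow_le_pow_left₀ (sq_nonneg x) (by linarith) 7
        _ = (912473096871571914483/1638400000000000000) := by norm_num
    have hlba7 : (0:ℝ) ≤ (x^2)^7 := by positivity
    have huba8 : (x^2)^8 ≤ (900610946612241479594721/655360000000000000000) := by
      calc (x^2)^8 ≤ ((987/400))^8 := pow_le_pow_left₀ (sq_nonneg x) (by linarith) 8
        _ = (900610946612241479594721/655360000000000000000) := by norm_num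
    have hlba8 : (0:ℝ) ≤ (x^2)^8 := by positivity
    have huba9 : (x^2)^9 ≤ (888903004306282340359989627/262144000000000000000000) := by
      calc (x^2)^9 ≤ ((987/400))^9 := pow_le_pow_left₀ (sq_nonneg x) (by linarith) 9
        _ = (888903004306282340359989627/262144000000000000000000) := by norm_num
    have hlba9 : (0:ℝ) ≤ (x^2)^9 := by positivity
    have huba10 : (x^2)^10 ≤ (877347265250300669935309761849/104857600000000000000000000) := by
      calc (x^2)^10 ≤ ((987/400))^10 := pow_le_pow_left₀ (sq_nonneg x) (by linarith) 10
        _ = (877347265250300669935309761849/104857600000000000000000000) := by norm_num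
    have hlba10 : (0:ℝ) ≤ (x^2)^10 := by positivity
    have huba11 : (x^2)^11 ≤ (865941750802046761226150734944963/41943040000000000000000000000) := by
      calc (x^2)^11 ≤ ((987/400))^11 := pow_le_pow_left₀ (sq_nonneg x) (by linarith) 11
        _ = (865941750802046761226150734944963/41943040000000000000000000000) := by norm_num
    have hlba11 : (0:ℝ) ≤ (x^2)^11 := by positivity
    have huba12 : (x^2)^12 ≤ (854684508041620153330210775390678481/16777216000000000000000000000000) := by
      calc (x^2)^12 ≤ ((987/400))^12 := pow_le_pow_left₀ (sq_nonneg x) (by linarith) 12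
        _ = (854684508041620153330210775390678481/16777216000000000000000000000000) := by norm_num
    have hlba12 : (0:ℝ) ≤ (x^2)^12 := by positivity
    have huba13 : (x^2)^13 ≤ (843573609437079091336918035310599660747/6710886400000000000000000000000000) := by
      calc (x^2)^13 ≤ ((987/400))^13 := pow_le_pow_left₀ (sq_nonneg x) (by linarith) 13
        _ = (843573609437079091336918035310599660747/6710886400000000000000000000000000) := by norm_num
    have hlba13 : (0:ℝ) ≤ (x^2)^13 := by positivity
    have huba14 : (x^2)^14 ≤ (832607152514397063149538100851561865157289/2684354560000000000000000000000000000) := by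
      calc (x^2)^14 ≤ ((987/400))^14 := pow_le_pow_left₀ (sq_nonneg x) (by linarith) 14
        _ = (832607152514397063149538100851561865157289/2684354560000000000000000000000000000) := by norm_num
    have hlba14 : (0:ℝ) ≤ (x^2)^14 := by positivity
    have hT : (0:ℝ) ≤ 1 + (-1/6)*x^2 + (1/120)*x^4 + (-1/5040)*x^6 + (1/362880)*x^8 + (-1/39916800)*x^10 := by linarith
    have hS11fac : (x - x^3/6 + x^5/120 - x^7/5040 + x^9/362880 - x^11/39916800) = x*(1 + (-1/6)*x^2 + (1/120)*x^4 + (-1/5040)*x^6 + (1/362880)*x^8 + (-1/39916800)*x^10) := by ring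
    have hS11pos : (0:ℝ) ≤ x - x^3/6 + x^5/120 - x^7/5040 + x^9/362880 - x^11/39916800 := by rw [hS11fac]; exact mul_nonneg hx hT
    have hfac : (2/45 - 2/315*x^2 - 4/1575*x^4) * x^3 * (x - x^3/6 + x^5/120 - x^7/5040 + x^9/362880 - x^11/39916800)^3
        - (x^2*(1 - x^2/2 + x^4/24 - x^6/720 + x^8/40320) + x*(1 - x^2/2 + x^4/24 - x^6/720 + x^8/40320)^2*(x - x^3/6 + x^5/120 - x^7/5040 + x^9/362880) - 2*(x - x^3/6 + x^5/120 - x^7/5040 + x^9/362880 - x^11/39916800)^2*(1 - x^2/2 + x^4/24 - x^6/720 + x^8/40320 - x^10/3628800)) = x^12 * ((31949/59875200) + (-70223/399168000)*x^2 + (1316531/50295168000)*x^4 + (-84788897/36212520960000)*x^6 + (72133631/506975293440000)*x^8 + (-301249493/47800527667200000)*x^10 + (142544807/669207387340800000)*x^12 + (-636096617/112426841073254400000)*x^14 + (607231619/5059207848296448000000)*x^16 + (-186070319/91065741269336064000000)*x^18 + (5056189/182131482538672128000000)*x^20 + (-134549/455328706346680320000000)*x^22 + (23687/10017231539626967040000000)*x^24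 + (-131/10017231539626967040000000)*x^26 + (1/25043078849067417600000000)*x^28) := by
      ring
    have hR : (0:ℝ) < (31949/59875200) + (-70223/399168000)*x^2 + (1316531/50295168000)*x^4 + (-84788897/36212520960000)*x^6 + (72133631/506975293440000)*x^8 + (-301249493/47800527667200000)*x^10 + (142544807/669207387340800000)*x^12 + (-636096617/112426841073254400000)*x^14 + (607231619/5059207848296448000000)*x^16 + (-186070319/91065741269336064000000)*x^18 + (5056189/182131482538672128000000)*x^20 + (-134549/455328706346680320000000)*x^22 + (23687/10017231539626967040000000)*x^24 + (-131/10017231539626967040000000)*x^26 + (1/25043078849067417600000000)*x^28 := by linarith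
    have hpos := mul_pos (pow_pos hx0 12) hR
    refine ⟨by linarith, hS11pos, by linarith⟩
  obtain ⟨key, hS11pos, hPb⟩ := key
  have hC8nn : (0:ℝ) ≤ 1 - x^2/2 + x^4/24 - x^6/720 + x^8/40320 := le_trans hc0 hC8
  have t1 : x^2*cos x ≤ x^2*(1 - x^2/2 + x^4/24 - x^6/720 + x^8/40320) := mul_le_mul_of_nonneg_left hC8 (sq_nonneg x)
  have w1 : (cos x)^2 ≤ (1 - x^2/2 + x^4/24 - x^6/720 + x^8/40320)^2 := pow_le_pow_left₀ hc0 hC8 2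
  have u1 : (cos x)^2*(sin x) ≤ (1 - x^2/2 + x^4/24 - x^6/720 + x^8/40320)^2*(x - x^3/6 + x^5/120 - x^7/5040 + x^9/362880) := by
    have w2 := mul_le_mul_of_nonneg_right w1 hs0.le
    have w3 := mul_le_mul_of_nonneg_left hS9 (sq_nonneg (1 - x^2/2 + x^4/24 - x^6/720 + x^8/40320))
    linarith
  have t2 := mul_le_mul_of_nonneg_left u1 hx
  have w4 : (x - x^3/6 + x^5/120 - x^7/5040 + x^9/362880 - x^11/39916800)^2 ≤ (sin x)^2 := pow_le_pow_left₀ hS11pos hS11 2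
  have t3 : (x - x^3/6 + x^5/120 - x^7/5040 + x^9/362880 - x^11/39916800)^2*(1 - x^2/2 + x^4/24 - x^6/720 + x^8/40320 - x^10/3628800) ≤ (sin x)^2*cos x := by
    have w5 := mul_le_mul_of_nonneg_right w4 hc0
    have w6 := mul_le_mul_of_nonneg_left hC10 (sq_nonneg (x - x^3/6 + x^5/120 - x^7/5040 + x^9/362880 - x^11/39916800))
    linarith
  have w7 : (x - x^3/6 + x^5/120 - x^7/5040 + x^9/362880 - x^11/39916800)^3 ≤ (sin x)^3 := pow_le_pow_left₀ hS11pos hS11 3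
  have t4 := mul_le_mul_of_nonneg_left w7 (mul_nonneg hPb (pow_nonneg hx 3))
  nlinarith [t1, t2, t3, t4, key]


lemma L2 (x : ℝ) (hx0 : 0 < x) (hxU : x ≤ 14/10) (hs0 : 0 < sin x) (hc0 : 0 ≤ cos x) :
    (2/45 - 2/315*x^2 - 4726/1000000*x^4) * x^3 * (sin x)^3
      < x^2*cos x + x*(cos x)^2*sin x - 2*(sin x)^2*cos x := by
  have hx := hx0.le
  have hS7 := sin_ge_S7 x hx
  have hS9 := sin_le_S9 x hx
  have hC6 := cos_ge_C6 x hx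
  have hC8 := cos_le_C8 x hx
  have hu : x^2 ≤ 196/100 := by nlinarith
  have hu4 : x^4 ≤ (196/100)^2 := by nlinarith
  have hu6 : x^6 ≤ (196/100)^3 := by nlinarith [sq_nonneg x, hu, hu4]
  have hC6nn : (0:ℝ) ≤ 1 - x^2/2 + x^4/24 - x^6/720 := by nlinarith
  have hT7 : (0:ℝ) ≤ 1 + (-1/6)*x^2 + (1/120)*x^4 + (-1/5040)*x^6 := by nlinarith
  have hS7fac : (x - x^3/6 + x^5/120 - x^7/5040) = x*(1 + (-1/6)*x^2 + (1/120)*x^4 + (-1/5040)*x^6) := by ring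
  have hS7nn : (0:ℝ) ≤ x - x^3/6 + x^5/120 - x^7/5040 := by rw [hS7fac]; exact mul_nonneg hx hT7
  have hPa : (0:ℝ) ≤ 2/45 - 2/315*x^2 - 4726/1000000*x^4 := by nlinarith
  have key : (2/45 - 2/315*x^2 - 4726/1000000*x^4) * x^3 * (x - x^3/6 + x^5/120 - x^7/5040 + x^9/362880)^3
      < x^2*(1 - x^2/2 + x^4/24 - x^6/720) + x*(1 - x^2/2 + x^4/24 - x^6/720)^2*(x - x^3/6 + x^5/120 - x^7/5040) - 2*(x - x^3/6 + x^5/120 - x^7/5040 + x^9/362880)^2*(1 - x^2/2 + x^4/24 - x^6/720 + x^8/40320) := by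
    have hfac : x^2*(1 - x^2/2 + x^4/24 - x^6/720) + x*(1 - x^2/2 + x^4/24 - x^6/720)^2*(x - x^3/6 + x^5/120 - x^7/5040) - 2*(x - x^3/6 + x^5/120 - x^7/5040 + x^9/362880)^2*(1 - x^2/2 + x^4/24 - x^6/720 + x^8/40320)
        - (2/45 - 2/315*x^2 - 4726/1000000*x^4) * x^3 * (x - x^3/6 + x^5/120 - x^7/5040 + x^9/362880)^3 = x^10 * ((298973/141750000) + (-5414551/3402000000)*x^2 + (27589721/68040000000)*x^4 + (-10498633/190512000000)*x^6 + (4864693721/1028764800000000)*x^8 + (-4045017983/14402707200000000)*x^10 + (10531724039/864162432000000000)*x^12 + (-686312897/1728324864000000000)*x^14 + (2841357191/290358577152000000000)*x^16 + (-157306913/871075731456000000000)*x^18 + (226321891/94076178997248000000000)*x^20 + (-3994463/188152357994496000000000)*x^22 + (2363/23892362919936000000000)*x^24) := by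
      ring
    have hR : (0:ℝ) < (298973/141750000) + (-5414551/3402000000)*x^2 + (27589721/68040000000)*x^4 + (-10498633/190512000000)*x^6 + (4864693721/1028764800000000)*x^8 + (-4045017983/14402707200000000)*x^10 + (10531724039/864162432000000000)*x^12 + (-686312897/1728324864000000000)*x^14 + (2841357191/290358577152000000000)*x^16 + (-157306913/871075731456000000000)*x^18 + (226321891/94076178997248000000000)*x^20 + (-3994463/188152357994496000000000)*x^22 + (2363/23892362919936000000000)*x^24 := by
      rcases le_or_gt (x^2) ((113/100)) with hdq0|hdq0
      · have hAAq0 : (0:ℝ) ≤ (x^2) := (sq_nonneg x)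
        have hubq01 : (x^2)^1 ≤ (113/100) := by
          calc (x^2)^1 ≤ ((113/100))^1 := pow_le_pow_left₀ (sq_nonneg x) hdq0 1
            _ = (113/100) := by norm_num
        have hlbq01 : (0:ℝ) ≤ (x^2)^1 := by positivity
        have hubq02 : (x^2)^2 ≤ (12769/10000) := by
          calc (x^2)^2 ≤ ((113/100))^2 := pow_le_pow_left₀ (sq_nonneg x) hdq0 2
            _ = (12769/10000) := by norm_num
        have hlbq02 : (0:ℝ) ≤ (x^2)^2 := by positivity
        have hubq03 : (x^2)^3 ≤ (1442897/1000000) := by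
          calc (x^2)^3 ≤ ((113/100))^3 := pow_le_pow_left₀ (sq_nonneg x) hdq0 3
            _ = (1442897/1000000) := by norm_num
        have hlbq03 : (0:ℝ) ≤ (x^2)^3 := by positivity
        have hubq04 : (x^2)^4 ≤ (163047361/100000000) := by
          calc (x^2)^4 ≤ ((113/100))^4 := pow_le_pow_left₀ (sq_nonneg x) hdq0 4
            _ = (163047361/100000000) := by norm_num
        have hlbq04 : (0:ℝ) ≤ (x^2)^4 := by positivity
        have hubq05 : (x^2)^5 ≤ (18424351793/10000000000) := by
          calc (x^2)^5 ≤ ((113/100))^5 := pow_le_pow_left₀ (sq_nonneg x) hdq0 5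
            _ = (18424351793/10000000000) := by norm_num
        have hlbq05 : (0:ℝ) ≤ (x^2)^5 := by positivity
        have hubq06 : (x^2)^6 ≤ (2081951752609/1000000000000) := by
          calc (x^2)^6 ≤ ((113/100))^6 := pow_le_pow_left₀ (sq_nonneg x) hdq0 6
            _ = (2081951752609/1000000000000) := by norm_num
        have hlbq06 : (0:ℝ) ≤ (x^2)^6 := by positivity
        have hubq07 : (x^2)^7 ≤ (235260548044817/100000000000000) := by
          calc (x^2)^7 ≤ ((113/100))^7 := pow_le_pow_left₀ (sq_nonneg x) hdq0 7
            _ = (235260548044817/100000000000000) := by norm_num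
        have hlbq07 : (0:ℝ) ≤ (x^2)^7 := by positivity
        have hubq08 : (x^2)^8 ≤ (26584441929064321/10000000000000000) := by
          calc (x^2)^8 ≤ ((113/100))^8 := pow_le_pow_left₀ (sq_nonneg x) hdq0 8
            _ = (26584441929064321/10000000000000000) := by norm_num
        have hlbq08 : (0:ℝ) ≤ (x^2)^8 := by positivity
        have hubq09 : (x^2)^9 ≤ (3004041937984268273/1000000000000000000) := by
          calc (x^2)^9 ≤ ((113/100))^9 := pow_le_pow_left₀ (sq_nonneg x) hdq0 9
            _ = (3004041937984268273/1000000000000000000) := by norm_num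
        have hlbq09 : (0:ℝ) ≤ (x^2)^9 := by positivity
        have hubq010 : (x^2)^10 ≤ (339456738992222314849/100000000000000000000) := by
          calc (x^2)^10 ≤ ((113/100))^10 := pow_le_pow_left₀ (sq_nonneg x) hdq0 10
            _ = (339456738992222314849/100000000000000000000) := by norm_num
        have hlbq010 : (0:ℝ) ≤ (x^2)^10 := by positivity
        have hubq011 : (x^2)^11 ≤ (38358611506121121577937/10000000000000000000000) := by
          calc (x^2)^11 ≤ ((113/100))^11 := pow_le_pow_left₀ (sq_nonneg x) hdq0 11
            _ = (38358611506121121577937/10000000000000000000000) := by norm_num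
        have hlbq011 : (0:ℝ) ≤ (x^2)^11 := by positivity
        have hubq012 : (x^2)^12 ≤ (4334523100191686738306881/1000000000000000000000000) := by
          calc (x^2)^12 ≤ ((113/100))^12 := pow_le_pow_left₀ (sq_nonneg x) hdq0 12
            _ = (4334523100191686738306881/1000000000000000000000000) := by norm_num
        have hlbq012 : (0:ℝ) ≤ (x^2)^12 := by positivity
        linarith
      rcases le_or_gt (x^2) ((149/100)) with hdq1|hdq1
      · have hAAq1 : ((113/100):ℝ) ≤ (x^2) := by linarith
        have hubq11 : (x^2)^1 ≤ (149/100) := by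
          calc (x^2)^1 ≤ ((149/100))^1 := pow_le_pow_left₀ (sq_nonneg x) hdq1 1
            _ = (149/100) := by norm_num
        have hlbq11 : ((113/100):ℝ) ≤ (x^2)^1 := by
          calc ((113/100):ℝ) = ((113/100))^1 := by norm_num
            _ ≤ (x^2)^1 := pow_le_pow_left₀ (by norm_num) hAAq1 1
        have hubq12 : (x^2)^2 ≤ (22201/10000) := by
          calc (x^2)^2 ≤ ((149/100))^2 := pow_le_pow_left₀ (sq_nonneg x) hdq1 2
            _ = (22201/10000) := by norm_num
        have hlbq12 : ((12769/10000):ℝ) ≤ (x^2)^2 := by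
          calc ((12769/10000):ℝ) = ((113/100))^2 := by norm_num
            _ ≤ (x^2)^2 := pow_le_pow_left₀ (by norm_num) hAAq1 2
        have hubq13 : (x^2)^3 ≤ (3307949/1000000) := by
          calc (x^2)^3 ≤ ((149/100))^3 := pow_le_pow_left₀ (sq_nonneg x) hdq1 3
            _ = (3307949/1000000) := by norm_num
        have hlbq13 : ((1442897/1000000):ℝ) ≤ (x^2)^3 := by
          calc ((1442897/1000000):ℝ) = ((113/100))^3 := by norm_num
            _ ≤ (x^2)^3 := pow_le_pow_left₀ (by norm_num) hAAq1 3
        have hubq14 : (x^2)^4 ≤ (492884401/100000000) := by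
          calc (x^2)^4 ≤ ((149/100))^4 := pow_le_pow_left₀ (sq_nonneg x) hdq1 4
            _ = (492884401/100000000) := by norm_num
        have hlbq14 : ((163047361/100000000):ℝ) ≤ (x^2)^4 := by
          calc ((163047361/100000000):ℝ) = ((113/100))^4 := by norm_num
            _ ≤ (x^2)^4 := pow_le_pow_left₀ (by norm_num) hAAq1 4
        have hubq15 : (x^2)^5 ≤ (73439775749/10000000000) := by
          calc (x^2)^5 ≤ ((149/100))^5 := pow_le_pow_left₀ (sq_nonneg x) hdq1 5
            _ = (73439775749/10000000000) := by norm_num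
        have hlbq15 : ((18424351793/10000000000):ℝ) ≤ (x^2)^5 := by
          calc ((18424351793/10000000000):ℝ) = ((113/100))^5 := by norm_num
            _ ≤ (x^2)^5 := pow_le_pow_left₀ (by norm_num) hAAq1 5
        have hubq16 : (x^2)^6 ≤ (10942526586601/1000000000000) := by
          calc (x^2)^6 ≤ ((149/100))^6 := pow_le_pow_left₀ (sq_nonneg x) hdq1 6
            _ = (10942526586601/1000000000000) := by norm_num
        have hlbq16 : ((2081951752609/1000000000000):ℝ) ≤ (x^2)^6 := by
          calc ((2081951752609/1000000000000):ℝ) = ((113/100))^6 := by norm_num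
            _ ≤ (x^2)^6 := pow_le_pow_left₀ (by norm_num) hAAq1 6
        have hubq17 : (x^2)^7 ≤ (1630436461403549/100000000000000) := by
          calc (x^2)^7 ≤ ((149/100))^7 := pow_le_pow_left₀ (sq_nonneg x) hdq1 7
            _ = (1630436461403549/100000000000000) := by norm_num
        have hlbq17 : ((235260548044817/100000000000000):ℝ) ≤ (x^2)^7 := by
          calc ((235260548044817/100000000000000):ℝ) = ((113/100))^7 := by norm_num
            _ ≤ (x^2)^7 := pow_le_pow_left₀ (by norm_num) hAAq1 7
        have hubq18 : (x^2)^8 ≤ (242935032749128801/10000000000000000) := by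
          calc (x^2)^8 ≤ ((149/100))^8 := pow_le_pow_left₀ (sq_nonneg x) hdq1 8
            _ = (242935032749128801/10000000000000000) := by norm_num
        have hlbq18 : ((26584441929064321/10000000000000000):ℝ) ≤ (x^2)^8 := by
          calc ((26584441929064321/10000000000000000):ℝ) = ((113/100))^8 := by norm_num
            _ ≤ (x^2)^8 := pow_le_pow_left₀ (by norm_num) hAAq1 8
        have hubq19 : (x^2)^9 ≤ (36197319879620191349/1000000000000000000) := by
          calc (x^2)^9 ≤ ((149/100))^9 := pow_le_pow_left₀ (sq_nonneg x) hdq1 9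
            _ = (36197319879620191349/1000000000000000000) := by norm_num
        have hlbq19 : ((3004041937984268273/1000000000000000000):ℝ) ≤ (x^2)^9 := by
          calc ((3004041937984268273/1000000000000000000):ℝ) = ((113/100))^9 := by norm_num
            _ ≤ (x^2)^9 := pow_le_pow_left₀ (by norm_num) hAAq1 9
        have hubq110 : (x^2)^10 ≤ (5393400662063408511001/100000000000000000000) := by
          calc (x^2)^10 ≤ ((149/100))^10 := pow_le_pow_left₀ (sq_nonneg x) hdq1 10
            _ = (5393400662063408511001/100000000000000000000) := by norm_num
        have hlbq110 : ((339456738992222314849/100000000000000000000):ℝ) ≤ (x^2)^10 := by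
          calc ((339456738992222314849/100000000000000000000):ℝ) = ((113/100))^10 := by norm_num
            _ ≤ (x^2)^10 := pow_le_pow_left₀ (by norm_num) hAAq1 10
        have hubq111 : (x^2)^11 ≤ (803616698647447868139149/10000000000000000000000) := by
          calc (x^2)^11 ≤ ((149/100))^11 := pow_le_pow_left₀ (sq_nonneg x) hdq1 11
            _ = (803616698647447868139149/10000000000000000000000) := by norm_num
        have hlbq111 : ((38358611506121121577937/10000000000000000000000):ℝ) ≤ (x^2)^11 := by
          calc ((38358611506121121577937/10000000000000000000000):ℝ) = ((113/100))^11 := by norm_num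
            _ ≤ (x^2)^11 := pow_le_pow_left₀ (by norm_num) hAAq1 11
        have hubq112 : (x^2)^12 ≤ (119738888098469732352733201/1000000000000000000000000) := by
          calc (x^2)^12 ≤ ((149/100))^12 := pow_le_pow_left₀ (sq_nonneg x) hdq1 12
            _ = (119738888098469732352733201/1000000000000000000000000) := by norm_num
        have hlbq112 : ((4334523100191686738306881/1000000000000000000000000):ℝ) ≤ (x^2)^12 := by
          calc ((4334523100191686738306881/1000000000000000000000000):ℝ) = ((113/100))^12 := by norm_num
            _ ≤ (x^2)^12 := pow_le_pow_left₀ (by norm_num) hAAq1 12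
        linarith
      rcases le_or_gt (x^2) ((851/500)) with hdq2|hdq2
      · have hAAq2 : ((149/100):ℝ) ≤ (x^2) := by linarith
        have hubq21 : (x^2)^1 ≤ (851/500) := by
          calc (x^2)^1 ≤ ((851/500))^1 := pow_le_pow_left₀ (sq_nonneg x) hdq2 1
            _ = (851/500) := by norm_num
        have hlbq21 : ((149/100):ℝ) ≤ (x^2)^1 := by
          calc ((149/100):ℝ) = ((149/100))^1 := by norm_num
            _ ≤ (x^2)^1 := pow_le_pow_left₀ (by norm_num) hAAq2 1
        have hubq22 : (x^2)^2 ≤ (724201/250000) := by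
          calc (x^2)^2 ≤ ((851/500))^2 := pow_le_pow_left₀ (sq_nonneg x) hdq2 2
            _ = (724201/250000) := by norm_num
        have hlbq22 : ((22201/10000):ℝ) ≤ (x^2)^2 := by
          calc ((22201/10000):ℝ) = ((149/100))^2 := by norm_num
            _ ≤ (x^2)^2 := pow_le_pow_left₀ (by norm_num) hAAq2 2
        have hubq23 : (x^2)^3 ≤ (616295051/125000000) := by
          calc (x^2)^3 ≤ ((851/500))^3 := pow_le_pow_left₀ (sq_nonneg x) hdq2 3
            _ = (616295051/125000000) := by norm_num
        have hlbq23 : ((3307949/1000000):ℝ) ≤ (x^2)^3 := by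
          calc ((3307949/1000000):ℝ) = ((149/100))^3 := by norm_num
            _ ≤ (x^2)^3 := pow_le_pow_left₀ (by norm_num) hAAq2 3
        have hubq24 : (x^2)^4 ≤ (524467088401/62500000000) := by
          calc (x^2)^4 ≤ ((851/500))^4 := pow_le_pow_left₀ (sq_nonneg x) hdq2 4
            _ = (524467088401/62500000000) := by norm_num
        have hlbq24 : ((492884401/100000000):ℝ) ≤ (x^2)^4 := by
          calc ((492884401/100000000):ℝ) = ((149/100))^4 := by norm_num
            _ ≤ (x^2)^4 := pow_le_pow_left₀ (by norm_num) hAAq2 4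
        have hubq25 : (x^2)^5 ≤ (446321492229251/31250000000000) := by
          calc (x^2)^5 ≤ ((851/500))^5 := pow_le_pow_left₀ (sq_nonneg x) hdq2 5
            _ = (446321492229251/31250000000000) := by norm_num
        have hlbq25 : ((73439775749/10000000000):ℝ) ≤ (x^2)^5 := by
          calc ((73439775749/10000000000):ℝ) = ((149/100))^5 := by norm_num
            _ ≤ (x^2)^5 := pow_le_pow_left₀ (by norm_num) hAAq2 5
        have hubq26 : (x^2)^6 ≤ (379819589887092601/15625000000000000) := by
          calc (x^2)^6 ≤ ((851/500))^6 := pow_le_pow_left₀ (sq_nonneg x) hdq2 6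
            _ = (379819589887092601/15625000000000000) := by norm_num
        have hlbq26 : ((10942526586601/1000000000000):ℝ) ≤ (x^2)^6 := by
          calc ((10942526586601/1000000000000):ℝ) = ((149/100))^6 := by norm_num
            _ ≤ (x^2)^6 := pow_le_pow_left₀ (by norm_num) hAAq2 6
        have hubq27 : (x^2)^7 ≤ (323226470993915803451/7812500000000000000) := by
          calc (x^2)^7 ≤ ((851/500))^7 := pow_le_pow_left₀ (sq_nonneg x) hdq2 7
            _ = (323226470993915803451/7812500000000000000) := by norm_num
        have hlbq27 : ((1630436461403549/100000000000000):ℝ) ≤ (x^2)^7 := by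
          calc ((1630436461403549/100000000000000):ℝ) = ((149/100))^7 := by norm_num
            _ ≤ (x^2)^7 := pow_le_pow_left₀ (by norm_num) hAAq2 7
        have hubq28 : (x^2)^8 ≤ (275065726815822348736801/3906250000000000000000) := by
          calc (x^2)^8 ≤ ((851/500))^8 := pow_le_pow_left₀ (sq_nonneg x) hdq2 8
            _ = (275065726815822348736801/3906250000000000000000) := by norm_num
        have hlbq28 : ((242935032749128801/10000000000000000):ℝ) ≤ (x^2)^8 := by
          calc ((242935032749128801/10000000000000000):ℝ) = ((149/100))^8 := by norm_num
            _ ≤ (x^2)^8 := pow_le_pow_left₀ (by norm_num) hAAq2 8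
        have hubq29 : (x^2)^9 ≤ (234080933520264818775017651/1953125000000000000000000) := by
          calc (x^2)^9 ≤ ((851/500))^9 := pow_le_pow_left₀ (sq_nonneg x) hdq2 9
            _ = (234080933520264818775017651/1953125000000000000000000) := by norm_num
        have hlbq29 : ((36197319879620191349/1000000000000000000):ℝ) ≤ (x^2)^9 := by
          calc ((36197319879620191349/1000000000000000000):ℝ) = ((149/100))^9 := by norm_num
            _ ≤ (x^2)^9 := pow_le_pow_left₀ (by norm_num) hAAq2 9
        have hubq210 : (x^2)^10 ≤ (199202874425745360777540021001/976562500000000000000000000) := by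
          calc (x^2)^10 ≤ ((851/500))^10 := pow_le_pow_left₀ (sq_nonneg x) hdq2 10
            _ = (199202874425745360777540021001/976562500000000000000000000) := by norm_num
        have hlbq210 : ((5393400662063408511001/100000000000000000000):ℝ) ≤ (x^2)^10 := by
          calc ((5393400662063408511001/100000000000000000000):ℝ) = ((149/100))^10 := by norm_num
            _ ≤ (x^2)^10 := pow_le_pow_left₀ (by norm_num) hAAq2 10
        have hubq211 : (x^2)^11 ≤ (169521646136309302021686557871851/488281250000000000000000000000) := by
          calc (x^2)^11 ≤ ((851/500))^11 := pow_le_pow_left₀ (sq_nonneg x) hdq2 11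
            _ = (169521646136309302021686557871851/488281250000000000000000000000) := by norm_num
        have hlbq211 : ((803616698647447868139149/10000000000000000000000):ℝ) ≤ (x^2)^11 := by
          calc ((803616698647447868139149/10000000000000000000000):ℝ) = ((149/100))^11 := by norm_num
            _ ≤ (x^2)^11 := pow_le_pow_left₀ (by norm_num) hAAq2 11
        have hubq212 : (x^2)^12 ≤ (144262920861999216020455260748945201/244140625000000000000000000000000) := by
          calc (x^2)^12 ≤ ((851/500))^12 := pow_le_pow_left₀ (sq_nonneg x) hdq2 12
            _ = (144262920861999216020455260748945201/244140625000000000000000000000000) := by norm_num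
        have hlbq212 : ((119738888098469732352733201/1000000000000000000000000):ℝ) ≤ (x^2)^12 := by
          calc ((119738888098469732352733201/1000000000000000000000000):ℝ) = ((149/100))^12 := by norm_num
            _ ≤ (x^2)^12 := pow_le_pow_left₀ (by norm_num) hAAq2 12
        linarith
      rcases le_or_gt (x^2) ((369/200)) with hdq3|hdq3
      · have hAAq3 : ((851/500):ℝ) ≤ (x^2) := by linarith
        have hubq31 : (x^2)^1 ≤ (369/200) := by
          calc (x^2)^1 ≤ ((369/200))^1 := pow_le_pow_left₀ (sq_nonneg x) hdq3 1
            _ = (369/200) := by norm_num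
        have hlbq31 : ((851/500):ℝ) ≤ (x^2)^1 := by
          calc ((851/500):ℝ) = ((851/500))^1 := by norm_num
            _ ≤ (x^2)^1 := pow_le_pow_left₀ (by norm_num) hAAq3 1
        have hubq32 : (x^2)^2 ≤ (136161/40000) := by
          calc (x^2)^2 ≤ ((369/200))^2 := pow_le_pow_left₀ (sq_nonneg x) hdq3 2
            _ = (136161/40000) := by norm_num
        have hlbq32 : ((724201/250000):ℝ) ≤ (x^2)^2 := by
          calc ((724201/250000):ℝ) = ((851/500))^2 := by norm_num
            _ ≤ (x^2)^2 := pow_le_pow_left₀ (by norm_num) hAAq3 2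
        have hubq33 : (x^2)^3 ≤ (50243409/8000000) := by
          calc (x^2)^3 ≤ ((369/200))^3 := pow_le_pow_left₀ (sq_nonneg x) hdq3 3
            _ = (50243409/8000000) := by norm_num
        have hlbq33 : ((616295051/125000000):ℝ) ≤ (x^2)^3 := by
          calc ((616295051/125000000):ℝ) = ((851/500))^3 := by norm_num
            _ ≤ (x^2)^3 := pow_le_pow_left₀ (by norm_num) hAAq3 3
        have hubq34 : (x^2)^4 ≤ (18539817921/1600000000) := by
          calc (x^2)^4 ≤ ((369/200))^4 := pow_le_pow_left₀ (sq_nonneg x) hdq3 4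
            _ = (18539817921/1600000000) := by norm_num
        have hlbq34 : ((524467088401/62500000000):ℝ) ≤ (x^2)^4 := by
          calc ((524467088401/62500000000):ℝ) = ((851/500))^4 := by norm_num
            _ ≤ (x^2)^4 := pow_le_pow_left₀ (by norm_num) hAAq3 4
        have hubq35 : (x^2)^5 ≤ (6841192812849/320000000000) := by
          calc (x^2)^5 ≤ ((369/200))^5 := pow_le_pow_left₀ (sq_nonneg x) hdq3 5
            _ = (6841192812849/320000000000) := by norm_num
        have hlbq35 : ((446321492229251/31250000000000):ℝ) ≤ (x^2)^5 := by
          calc ((446321492229251/31250000000000):ℝ) = ((851/500))^5 := by norm_num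
            _ ≤ (x^2)^5 := pow_le_pow_left₀ (by norm_num) hAAq3 5
        have hubq36 : (x^2)^6 ≤ (2524400147941281/64000000000000) := by
          calc (x^2)^6 ≤ ((369/200))^6 := pow_le_pow_left₀ (sq_nonneg x) hdq3 6
            _ = (2524400147941281/64000000000000) := by norm_num
        have hlbq36 : ((379819589887092601/15625000000000000):ℝ) ≤ (x^2)^6 := by
          calc ((379819589887092601/15625000000000000):ℝ) = ((851/500))^6 := by norm_num
            _ ≤ (x^2)^6 := pow_le_pow_left₀ (by norm_num) hAAq3 6
        have hubq37 : (x^2)^7 ≤ (931503654590332689/12800000000000000) := by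
          calc (x^2)^7 ≤ ((369/200))^7 := pow_le_pow_left₀ (sq_nonneg x) hdq3 7
            _ = (931503654590332689/12800000000000000) := by norm_num
        have hlbq37 : ((323226470993915803451/7812500000000000000):ℝ) ≤ (x^2)^7 := by
          calc ((323226470993915803451/7812500000000000000):ℝ) = ((851/500))^7 := by norm_num
            _ ≤ (x^2)^7 := pow_le_pow_left₀ (by norm_num) hAAq3 7
        have hubq38 : (x^2)^8 ≤ (343724848543832762241/2560000000000000000) := by
          calc (x^2)^8 ≤ ((369/200))^8 := pow_le_pow_left₀ (sq_nonneg x) hdq3 8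
            _ = (343724848543832762241/2560000000000000000) := by norm_num
        have hlbq38 : ((275065726815822348736801/3906250000000000000000):ℝ) ≤ (x^2)^8 := by
          calc ((275065726815822348736801/3906250000000000000000):ℝ) = ((851/500))^8 := by norm_num
            _ ≤ (x^2)^8 := pow_le_pow_left₀ (by norm_num) hAAq3 8
        have hubq39 : (x^2)^9 ≤ (126834469112674289266929/512000000000000000000) := by
          calc (x^2)^9 ≤ ((369/200))^9 := pow_le_pow_left₀ (sq_nonneg x) hdq3 9
            _ = (126834469112674289266929/512000000000000000000) := by norm_num
        have hlbq39 : ((234080933520264818775017651/1953125000000000000000000):ℝ) ≤ (x^2)^9 := by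
          calc ((234080933520264818775017651/1953125000000000000000000):ℝ) = ((851/500))^9 := by norm_num
            _ ≤ (x^2)^9 := pow_le_pow_left₀ (by norm_num) hAAq3 9
        have hubq310 : (x^2)^10 ≤ (46801919102576812739496801/102400000000000000000000) := by
          calc (x^2)^10 ≤ ((369/200))^10 := pow_le_pow_left₀ (sq_nonneg x) hdq3 10
            _ = (46801919102576812739496801/102400000000000000000000) := by norm_num
        have hlbq310 : ((199202874425745360777540021001/976562500000000000000000000):ℝ) ≤ (x^2)^10 := by
          calc ((199202874425745360777540021001/976562500000000000000000000):ℝ) = ((851/500))^10 := by norm_num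
            _ ≤ (x^2)^10 := pow_le_pow_left₀ (by norm_num) hAAq3 10
        have hubq311 : (x^2)^11 ≤ (17269908148850843900874319569/20480000000000000000000000) := by
          calc (x^2)^11 ≤ ((369/200))^11 := pow_le_pow_left₀ (sq_nonneg x) hdq3 11
            _ = (17269908148850843900874319569/20480000000000000000000000) := by norm_num
        have hlbq311 : ((169521646136309302021686557871851/488281250000000000000000000000):ℝ) ≤ (x^2)^11 := by
          calc ((169521646136309302021686557871851/488281250000000000000000000000):ℝ) = ((851/500))^11 := by norm_num
            _ ≤ (x^2)^11 := pow_le_pow_left₀ (by norm_num) hAAq3 11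
        have hubq312 : (x^2)^12 ≤ (6372596106925961399422623920961/4096000000000000000000000000) := by
          calc (x^2)^12 ≤ ((369/200))^12 := pow_le_pow_left₀ (sq_nonneg x) hdq3 12
            _ = (6372596106925961399422623920961/4096000000000000000000000000) := by norm_num
        have hlbq312 : ((144262920861999216020455260748945201/244140625000000000000000000000000):ℝ) ≤ (x^2)^12 := by
          calc ((144262920861999216020455260748945201/244140625000000000000000000000000):ℝ) = ((851/500))^12 := by norm_num
            _ ≤ (x^2)^12 := pow_le_pow_left₀ (by norm_num) hAAq3 12
        linarith
      have hBBq : (x^2) ≤ ((49/25):ℝ) := by linarith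
      have hAAq4 : ((369/200):ℝ) ≤ (x^2) := by linarith
      have hubq41 : (x^2)^1 ≤ (49/25) := by
        calc (x^2)^1 ≤ ((49/25))^1 := pow_le_pow_left₀ (sq_nonneg x) hBBq 1
          _ = (49/25) := by norm_num
      have hlbq41 : ((369/200):ℝ) ≤ (x^2)^1 := by
        calc ((369/200):ℝ) = ((369/200))^1 := by norm_num
          _ ≤ (x^2)^1 := pow_le_pow_left₀ (by norm_num) hAAq4 1
      have hubq42 : (x^2)^2 ≤ (2401/625) := by
        calc (x^2)^2 ≤ ((49/25))^2 := pow_le_pow_left₀ (sq_nonneg x) hBBq 2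
          _ = (2401/625) := by norm_num
      have hlbq42 : ((136161/40000):ℝ) ≤ (x^2)^2 := by
        calc ((136161/40000):ℝ) = ((369/200))^2 := by norm_num
          _ ≤ (x^2)^2 := pow_le_pow_left₀ (by norm_num) hAAq4 2
      have hubq43 : (x^2)^3 ≤ (117649/15625) := by
        calc (x^2)^3 ≤ ((49/25))^3 := pow_le_pow_left₀ (sq_nonneg x) hBBq 3
          _ = (117649/15625) := by norm_num
      have hlbq43 : ((50243409/8000000):ℝ) ≤ (x^2)^3 := by
        calc ((50243409/8000000):ℝ) = ((369/200))^3 := by norm_num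
          _ ≤ (x^2)^3 := pow_le_pow_left₀ (by norm_num) hAAq4 3
      have hubq44 : (x^2)^4 ≤ (5764801/390625) := by
        calc (x^2)^4 ≤ ((49/25))^4 := pow_le_pow_left₀ (sq_nonneg x) hBBq 4
          _ = (5764801/390625) := by norm_num
      have hlbq44 : ((18539817921/1600000000):ℝ) ≤ (x^2)^4 := by
        calc ((18539817921/1600000000):ℝ) = ((369/200))^4 := by norm_num
          _ ≤ (x^2)^4 := pow_le_pow_left₀ (by norm_num) hAAq4 4
      have hubq45 : (x^2)^5 ≤ (282475249/9765625) := by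
        calc (x^2)^5 ≤ ((49/25))^5 := pow_le_pow_left₀ (sq_nonneg x) hBBq 5
          _ = (282475249/9765625) := by norm_num
      have hlbq45 : ((6841192812849/320000000000):ℝ) ≤ (x^2)^5 := by
        calc ((6841192812849/320000000000):ℝ) = ((369/200))^5 := by norm_num
          _ ≤ (x^2)^5 := pow_le_pow_left₀ (by norm_num) hAAq4 5
      have hubq46 : (x^2)^6 ≤ (13841287201/244140625) := by
        calc (x^2)^6 ≤ ((49/25))^6 := pow_le_pow_left₀ (sq_nonneg x) hBBq 6
          _ = (13841287201/244140625) := by norm_num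
      have hlbq46 : ((2524400147941281/64000000000000):ℝ) ≤ (x^2)^6 := by
        calc ((2524400147941281/64000000000000):ℝ) = ((369/200))^6 := by norm_num
          _ ≤ (x^2)^6 := pow_le_pow_left₀ (by norm_num) hAAq4 6
      have hubq47 : (x^2)^7 ≤ (678223072849/6103515625) := by
        calc (x^2)^7 ≤ ((49/25))^7 := pow_le_pow_left₀ (sq_nonneg x) hBBq 7
          _ = (678223072849/6103515625) := by norm_num
      have hlbq47 : ((931503654590332689/12800000000000000):ℝ) ≤ (x^2)^7 := by
        calc ((931503654590332689/12800000000000000):ℝ) = ((369/200))^7 := by norm_num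
          _ ≤ (x^2)^7 := pow_le_pow_left₀ (by norm_num) hAAq4 7
      have hubq48 : (x^2)^8 ≤ (33232930569601/152587890625) := by
        calc (x^2)^8 ≤ ((49/25))^8 := pow_le_pow_left₀ (sq_nonneg x) hBBq 8
          _ = (33232930569601/152587890625) := by norm_num
      have hlbq48 : ((343724848543832762241/2560000000000000000):ℝ) ≤ (x^2)^8 := by
        calc ((343724848543832762241/2560000000000000000):ℝ) = ((369/200))^8 := by norm_num
          _ ≤ (x^2)^8 := pow_le_pow_left₀ (by norm_num) hAAq4 8
      have hubq49 : (x^2)^9 ≤ (1628413597910449/3814697265625) := by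
        calc (x^2)^9 ≤ ((49/25))^9 := pow_le_pow_left₀ (sq_nonneg x) hBBq 9
          _ = (1628413597910449/3814697265625) := by norm_num
      have hlbq49 : ((126834469112674289266929/512000000000000000000):ℝ) ≤ (x^2)^9 := by
        calc ((126834469112674289266929/512000000000000000000):ℝ) = ((369/200))^9 := by norm_num
          _ ≤ (x^2)^9 := pow_le_pow_left₀ (by norm_num) hAAq4 9
      have hubq410 : (x^2)^10 ≤ (79792266297612001/95367431640625) := by
        calc (x^2)^10 ≤ ((49/25))^10 := pow_le_pow_left₀ (sq_nonneg x) hBBq 10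
          _ = (79792266297612001/95367431640625) := by norm_num
      have hlbq410 : ((46801919102576812739496801/102400000000000000000000):ℝ) ≤ (x^2)^10 := by
        calc ((46801919102576812739496801/102400000000000000000000):ℝ) = ((369/200))^10 := by norm_num
          _ ≤ (x^2)^10 := pow_le_pow_left₀ (by norm_num) hAAq4 10
      have hubq411 : (x^2)^11 ≤ (3909821048582988049/2384185791015625) := by
        calc (x^2)^11 ≤ ((49/25))^11 := pow_le_pow_left₀ (sq_nonneg x) hBBq 11
          _ = (3909821048582988049/2384185791015625) := by norm_num
      have hlbq411 : ((17269908148850843900874319569/20480000000000000000000000):ℝ) ≤ (x^2)^11 := by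
        calc ((17269908148850843900874319569/20480000000000000000000000):ℝ) = ((369/200))^11 := by norm_num
          _ ≤ (x^2)^11 := pow_le_pow_left₀ (by norm_num) hAAq4 11
      have hubq412 : (x^2)^12 ≤ (191581231380566414401/59604644775390625) := by
        calc (x^2)^12 ≤ ((49/25))^12 := pow_le_pow_left₀ (sq_nonneg x) hBBq 12
          _ = (191581231380566414401/59604644775390625) := by norm_num
      have hlbq412 : ((6372596106925961399422623920961/4096000000000000000000000000):ℝ) ≤ (x^2)^12 := by
        calc ((6372596106925961399422623920961/4096000000000000000000000000):ℝ) = ((369/200))^12 := by norm_num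
          _ ≤ (x^2)^12 := pow_le_pow_left₀ (by norm_num) hAAq4 12
      linarith
    linarith [hfac, mul_pos (pow_pos hx0 10) hR]
  have t1 : x^2*(1 - x^2/2 + x^4/24 - x^6/720) ≤ x^2*cos x := mul_le_mul_of_nonneg_left hC6 (sq_nonneg x)
  have w1 : (1 - x^2/2 + x^4/24 - x^6/720)^2 ≤ (cos x)^2 := pow_le_pow_left₀ hC6nn hC6 2
  have u1 : (1 - x^2/2 + x^4/24 - x^6/720)^2*(x - x^3/6 + x^5/120 - x^7/5040) ≤ (cos x)^2*(sin x) := by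
    have w2 := mul_le_mul_of_nonneg_left hS7 (sq_nonneg (1 - x^2/2 + x^4/24 - x^6/720))
    have w3 := mul_le_mul_of_nonneg_right w1 hs0.le
    linarith
  have t2 := mul_le_mul_of_nonneg_left u1 hx
  have w4 : (sin x)^2 ≤ (x - x^3/6 + x^5/120 - x^7/5040 + x^9/362880)^2 := pow_le_pow_left₀ hs0.le hS9 2
  have t3 : (sin x)^2*cos x ≤ (x - x^3/6 + x^5/120 - x^7/5040 + x^9/362880)^2*(1 - x^2/2 + x^4/24 - x^6/720 + x^8/40320) := by
    have w5 := mul_le_mul_of_nonneg_right w4 hc0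
    have w6 := mul_le_mul_of_nonneg_left hC8 (sq_nonneg (x - x^3/6 + x^5/120 - x^7/5040 + x^9/362880))
    linarith
  have w7 : (sin x)^3 ≤ (x - x^3/6 + x^5/120 - x^7/5040 + x^9/362880)^3 := pow_le_pow_left₀ hs0.le hS9 3
  have t4 := mul_le_mul_of_nonneg_left w7 (mul_nonneg hPa (pow_nonneg hx 3))
  nlinarith [t1, t2, t3, t4, key]


lemma L3 (x : ℝ) (h14 : 14/10 ≤ x) (h2 : x < π/2) :
    (2/45 - 2/315*x^2 - ((224 - 8*π^2)/(315*π^4))*x^4) * x^3 * (sin x)^3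
      < x^2*cos x + x*(cos x)^2*sin x - 2*(sin x)^2*cos x := by
  have hp1 : (3141592/1000000:ℝ) < π := by
    have := Real.pi_gt_d6; norm_num at this ⊢; linarith
  have hp2 : π < (3141593/1000000:ℝ) := by
    have := Real.pi_lt_d6; norm_num at this ⊢; linarith
  obtain ⟨y, hy⟩ : ∃ y : ℝ, y = π/2 - x := ⟨_, rfl⟩
  have hy0 : 0 < y := by rw [hy]; linarith
  have hy1 : y ≤ 171/1000 := by rw [hy]; linarith
  have hxy : x = π/2 - y := by rw [hy]; ring
  have hx0 : (0:ℝ) < x := by linarith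
  have hsx_eq : sin x = cos y := by rw [hxy, Real.sin_pi_div_two_sub]
  have hcx_eq : cos x = sin y := by rw [hxy, Real.cos_pi_div_two_sub]
  have hsy_nn : 0 ≤ sin y := Real.sin_nonneg_of_nonneg_of_le_pi hy0.le (by linarith)
  have hcx0 : 0 ≤ cos x := by rw [hcx_eq]; exact hsy_nn
  have hy2b : y^2 ≤ (171/1000)^2 := pow_le_pow_left₀ hy0.le hy1 2
  have hcyl : 1 - y^2/2 ≤ cos y := Real.one_sub_sq_div_two_le_cos
  have hcyu : cos y ≤ 1 - y^2/2 + y^4/24 := cos_le_C4 y hy0.le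
  have hsyl : y - y^3/6 ≤ sin y := sin_ge_S3 y hy0.le
  have hsx0 : 0 ≤ sin x := by rw [hsx_eq]; nlinarith
  have hsxu : sin x ≤ 1 - y^2/2 + y^4/24 := by rw [hsx_eq]; exact hcyu
  have hcxl : y - y^3/6 ≤ cos x := by rw [hcx_eq]; exact hsyl
  have hsyl0 : (0:ℝ) ≤ y - y^3/6 := by nlinarith
  have hπ0 : (π:ℝ) ≠ 0 := Real.pi_ne_zero
  have hid : (2/45 - 2/315*x^2 - ((224 - 8*π^2)/(315*π^4))*x^4)
      = (π/2 - x)*(π/2 + x)*(((224 - 8*π^2)/(315*π^4))*x^2 + 8/(45*π^2)) := by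
    field_simp
    ring
  have hpi2a : (98696/10000:ℝ) ≤ π^2 := by nlinarith
  have hpi2b : π^2 ≤ (98696066/10000000:ℝ) := by nlinarith
  have hpi4a : (9740890/100000:ℝ) ≤ π^4 := by nlinarith
  have hpi4b : π^4 ≤ (97409136/1000000:ℝ) := by nlinarith
  have hαpos : (0:ℝ) < (224 - 8*π^2)/(315*π^4) := by
    apply div_pos (by nlinarith) (by positivity)
  have hαH : (224 - 8*π^2)/(315*π^4) ≤ 4728/1000000 := by
    rw [div_le_iff₀ (by positivity)]
    nlinarith
  have hc2H : 8/(45*π^2) ≤ 180127/10000000 := by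
    rw [div_le_iff₀ (by positivity)]
    nlinarith
  have hc2pos : (0:ℝ) < 8/(45*π^2) := by positivity
  have hxhiY : x ≤ 15707965/10000000 - y := by rw [hxy]; linarith
  have hxloY : 1570796/1000000 - y ≤ x := by rw [hxy]; linarith
  have hx2b : x^2 ≤ (15707965/10000000 - y)^2 := pow_le_pow_left₀ hx0.le hxhiY 2
  have hx3b : x^3 ≤ (15707965/10000000 - y)^3 := pow_le_pow_left₀ hx0.le hxhiY 3
  have hs3b : (sin x)^3 ≤ (1 - y^2/2 + y^4/24)^3 := pow_le_pow_left₀ hsx0 hsxu 3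
  have hKb : ((224 - 8*π^2)/(315*π^4))*x^2 + 8/(45*π^2) ≤ (4728/1000000)*(15707965/10000000 - y)^2 + 180127/10000000 := by
    have m1 := mul_le_mul_of_nonneg_left hx2b hαpos.le
    have m2 := mul_le_mul_of_nonneg_right hαH (sq_nonneg (15707965/10000000 - y))
    linarith
  have hK0 : (0:ℝ) ≤ ((224 - 8*π^2)/(315*π^4))*x^2 + 8/(45*π^2) :=
    add_nonneg (mul_nonneg hαpos.le (sq_nonneg x)) hc2pos.le
  have hb1 : π - y ≤ 3141593/1000000 - y := by linarith
  have hKH0 : (0:ℝ) ≤ (4728/1000000)*(15707965/10000000 - y)^2 + 180127/10000000 := by positivity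
  have P1 : (π - y)*(((224 - 8*π^2)/(315*π^4))*x^2 + 8/(45*π^2)) ≤ (3141593/1000000 - y)*((4728/1000000)*(15707965/10000000 - y)^2 + 180127/10000000) :=
    mul_le_mul hb1 hKb hK0 (by linarith)
  have P2 : (π - y)*(((224 - 8*π^2)/(315*π^4))*x^2 + 8/(45*π^2))*x^3
      ≤ (3141593/1000000 - y)*((4728/1000000)*(15707965/10000000 - y)^2 + 180127/10000000)*(15707965/10000000 - y)^3 :=
    mul_le_mul P1 hx3b (pow_nonneg hx0.le 3) (mul_nonneg (by linarith) hKH0)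
  have P3 : (π - y)*(((224 - 8*π^2)/(315*π^4))*x^2 + 8/(45*π^2))*x^3*(sin x)^3
      ≤ (3141593/1000000 - y)*((4728/1000000)*(15707965/10000000 - y)^2 + 180127/10000000)*(15707965/10000000 - y)^3*(1 - y^2/2 + y^4/24)^3 :=
    mul_le_mul P2 hs3b (pow_nonneg hsx0 3)
      (mul_nonneg (mul_nonneg (by linarith) hKH0) (pow_nonneg (by linarith) 3))
  have a1 : (1570796/1000000 - y)^2 ≤ x^2 := pow_le_pow_left₀ (by linarith) hxloY 2
  have a2 : (y - y^3/6)*(1 - y^2/2) ≤ cos x*sin x := by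
    rw [hcx_eq, hsx_eq]
    exact mul_le_mul hsyl hcyl (by nlinarith) hsy_nn
  have a3 : (1570796/1000000 - y)*((y - y^3/6)*(1 - y^2/2)) ≤ x*(cos x*sin x) :=
    mul_le_mul hxloY a2 (mul_nonneg hsyl0 (by nlinarith)) hx0.le
  have a4 : (sin x)^2 ≤ (1 - y^2/2 + y^4/24)^2 := pow_le_pow_left₀ hsx0 hsxu 2
  obtain ⟨AL, hALdef⟩ : ∃ v : ℝ, v = (1570796/1000000 - y)^2 + (1570796/1000000 - y)*((y - y^3/6)*(1 - y^2/2)) - 2*(1 - y^2/2 + y^4/24)^2 := ⟨_, rfl⟩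
  have hA : AL ≤ x^2 + x*(cos x*sin x) - 2*(sin x)^2 := by
    rw [hALdef]
    linarith
  have hALpos : (0:ℝ) < AL := by
    rw [hALdef]
    have hBBr : (y) ≤ ((171/1000):ℝ) := by linarith
    have hAAr0 : (0:ℝ) ≤ (y) := hy0.le
    have hubr01 : (y)^1 ≤ (171/1000) := by
      calc (y)^1 ≤ ((171/1000))^1 := pow_le_pow_left₀ hy0.le hBBr 1
        _ = (171/1000) := by norm_num
    have hlbr01 : (0:ℝ) ≤ (y)^1 := by positivity
    have hubr02 : (y)^2 ≤ (29241/1000000) := by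
      calc (y)^2 ≤ ((171/1000))^2 := pow_le_pow_left₀ hy0.le hBBr 2
        _ = (29241/1000000) := by norm_num
    have hlbr02 : (0:ℝ) ≤ (y)^2 := by positivity
    have hubr03 : (y)^3 ≤ (5000211/1000000000) := by
      calc (y)^3 ≤ ((171/1000))^3 := pow_le_pow_left₀ hy0.le hBBr 3
        _ = (5000211/1000000000) := by norm_num
    have hlbr03 : (0:ℝ) ≤ (y)^3 := by positivity
    have hubr04 : (y)^4 ≤ (855036081/1000000000000) := by
      calc (y)^4 ≤ ((171/1000))^4 := pow_le_pow_left₀ hy0.le hBBr 4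
        _ = (855036081/1000000000000) := by norm_num
    have hlbr04 : (0:ℝ) ≤ (y)^4 := by positivity
    have hubr05 : (y)^5 ≤ (146211169851/1000000000000000) := by
      calc (y)^5 ≤ ((171/1000))^5 := pow_le_pow_left₀ hy0.le hBBr 5
        _ = (146211169851/1000000000000000) := by norm_num
    have hlbr05 : (0:ℝ) ≤ (y)^5 := by positivity
    have hubr06 : (y)^6 ≤ (25002110044521/1000000000000000000) := by
      calc (y)^6 ≤ ((171/1000))^6 := pow_le_pow_left₀ hy0.le hBBr 6
        _ = (25002110044521/1000000000000000000) := by norm_num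
    have hlbr06 : (0:ℝ) ≤ (y)^6 := by positivity
    have hubr07 : (y)^7 ≤ (4275360817613091/1000000000000000000000) := by
      calc (y)^7 ≤ ((171/1000))^7 := pow_le_pow_left₀ hy0.le hBBr 7
        _ = (4275360817613091/1000000000000000000000) := by norm_num
    have hlbr07 : (0:ℝ) ≤ (y)^7 := by positivity
    have hubr08 : (y)^8 ≤ (731086699811838561/1000000000000000000000000) := by
      calc (y)^8 ≤ ((171/1000))^8 := pow_le_pow_left₀ hy0.le hBBr 8
        _ = (731086699811838561/1000000000000000000000000) := by norm_num
    have hlbr08 : (0:ℝ) ≤ (y)^8 := by positivity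
    linarith
  have hcA : (y - y^3/6)*AL ≤ cos x*(x^2 + x*(cos x*sin x) - 2*(sin x)^2) :=
    mul_le_mul hcxl hA hALpos.le hcx0
  obtain ⟨BR, hBRdef⟩ : ∃ v : ℝ, v = (1 - y^2/6)*AL - ((3141593/1000000 - y)*((4728/1000000)*(15707965/10000000 - y)^2 + 180127/10000000)*(15707965/10000000 - y)^3*(1 - y^2/2 + y^4/24)^3) := ⟨_, rfl⟩
  have hBRpos : (0:ℝ) < BR := by
    rw [hBRdef, hALdef]
    rcases le_or_gt (y) ((151/1000)) with hds0|hds0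
    · have hAAs0 : (0:ℝ) ≤ (y) := hy0.le
      have hubs01 : (y)^1 ≤ (151/1000) := by
        calc (y)^1 ≤ ((151/1000))^1 := pow_le_pow_left₀ hy0.le hds0 1
          _ = (151/1000) := by norm_num
      have hlbs01 : (0:ℝ) ≤ (y)^1 := by positivity
      have hubs02 : (y)^2 ≤ (22801/1000000) := by
        calc (y)^2 ≤ ((151/1000))^2 := pow_le_pow_left₀ hy0.le hds0 2
          _ = (22801/1000000) := by norm_num
      have hlbs02 : (0:ℝ) ≤ (y)^2 := by positivity
      have hubs03 : (y)^3 ≤ (3442951/1000000000) := by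
        calc (y)^3 ≤ ((151/1000))^3 := pow_le_pow_left₀ hy0.le hds0 3
          _ = (3442951/1000000000) := by norm_num
      have hlbs03 : (0:ℝ) ≤ (y)^3 := by positivity
      have hubs04 : (y)^4 ≤ (519885601/1000000000000) := by
        calc (y)^4 ≤ ((151/1000))^4 := pow_le_pow_left₀ hy0.le hds0 4
          _ = (519885601/1000000000000) := by norm_num
      have hlbs04 : (0:ℝ) ≤ (y)^4 := by positivity
      have hubs05 : (y)^5 ≤ (78502725751/1000000000000000) := by
        calc (y)^5 ≤ ((151/1000))^5 := pow_le_pow_left₀ hy0.le hds0 5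
          _ = (78502725751/1000000000000000) := by norm_num
      have hlbs05 : (0:ℝ) ≤ (y)^5 := by positivity
      have hubs06 : (y)^6 ≤ (11853911588401/1000000000000000000) := by
        calc (y)^6 ≤ ((151/1000))^6 := pow_le_pow_left₀ hy0.le hds0 6
          _ = (11853911588401/1000000000000000000) := by norm_num
      have hlbs06 : (0:ℝ) ≤ (y)^6 := by positivity
      have hubs07 : (y)^7 ≤ (1789940649848551/1000000000000000000000) := by
        calc (y)^7 ≤ ((151/1000))^7 := pow_le_pow_left₀ hy0.le hds0 7
          _ = (1789940649848551/1000000000000000000000) := by norm_num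
      have hlbs07 : (0:ℝ) ≤ (y)^7 := by positivity
      have hubs08 : (y)^8 ≤ (270281038127131201/1000000000000000000000000) := by
        calc (y)^8 ≤ ((151/1000))^8 := pow_le_pow_left₀ hy0.le hds0 8
          _ = (270281038127131201/1000000000000000000000000) := by norm_num
      have hlbs08 : (0:ℝ) ≤ (y)^8 := by positivity
      have hubs09 : (y)^9 ≤ (40812436757196811351/1000000000000000000000000000) := by
        calc (y)^9 ≤ ((151/1000))^9 := pow_le_pow_left₀ hy0.le hds0 9
          _ = (40812436757196811351/1000000000000000000000000000) := by norm_num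
      have hlbs09 : (0:ℝ) ≤ (y)^9 := by positivity
      have hubs010 : (y)^10 ≤ (6162677950336718514001/1000000000000000000000000000000) := by
        calc (y)^10 ≤ ((151/1000))^10 := pow_le_pow_left₀ hy0.le hds0 10
          _ = (6162677950336718514001/1000000000000000000000000000000) := by norm_num
      have hlbs010 : (0:ℝ) ≤ (y)^10 := by positivity
      have hubs011 : (y)^11 ≤ (930564370500844495614151/1000000000000000000000000000000000) := by
        calc (y)^11 ≤ ((151/1000))^11 := pow_le_pow_left₀ hy0.le hds0 11
          _ = (930564370500844495614151/1000000000000000000000000000000000) := by norm_num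
      have hlbs011 : (0:ℝ) ≤ (y)^11 := by positivity
      have hubs012 : (y)^12 ≤ (140515219945627518837736801/1000000000000000000000000000000000000) := by
        calc (y)^12 ≤ ((151/1000))^12 := pow_le_pow_left₀ hy0.le hds0 12
          _ = (140515219945627518837736801/1000000000000000000000000000000000000) := by norm_num
      have hlbs012 : (0:ℝ) ≤ (y)^12 := by positivity
      have hubs013 : (y)^13 ≤ (21217798211789755344498256951/1000000000000000000000000000000000000000) := by
        calc (y)^13 ≤ ((151/1000))^13 := pow_le_pow_left₀ hy0.le hds0 13
          _ = (21217798211789755344498256951/1000000000000000000000000000000000000000) := by norm_num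
      have hlbs013 : (0:ℝ) ≤ (y)^13 := by positivity
      have hubs014 : (y)^14 ≤ (3203887529980253057019236799601/1000000000000000000000000000000000000000000) := by
        calc (y)^14 ≤ ((151/1000))^14 := pow_le_pow_left₀ hy0.le hds0 14
          _ = (3203887529980253057019236799601/1000000000000000000000000000000000000000000) := by norm_num
      have hlbs014 : (0:ℝ) ≤ (y)^14 := by positivity
      have hubs015 : (y)^15 ≤ (483787017027018211609904756739751/1000000000000000000000000000000000000000000000) := by
        calc (y)^15 ≤ ((151/1000))^15 := pow_le_pow_left₀ hy0.le hds0 15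
          _ = (483787017027018211609904756739751/1000000000000000000000000000000000000000000000) := by norm_num
      have hlbs015 : (0:ℝ) ≤ (y)^15 := by positivity
      have hubs016 : (y)^16 ≤ (73051839571079749953095618267702401/1000000000000000000000000000000000000000000000000) := by
        calc (y)^16 ≤ ((151/1000))^16 := pow_le_pow_left₀ hy0.le hds0 16
          _ = (73051839571079749953095618267702401/1000000000000000000000000000000000000000000000000) := by norm_num
      have hlbs016 : (0:ℝ) ≤ (y)^16 := by positivity
      have hubs017 : (y)^17 ≤ (11030827775233042242917438358423062551/1000000000000000000000000000000000000000000000000000) := by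
        calc (y)^17 ≤ ((151/1000))^17 := pow_le_pow_left₀ hy0.le hds0 17
          _ = (11030827775233042242917438358423062551/1000000000000000000000000000000000000000000000000000) := by norm_num
      have hlbs017 : (0:ℝ) ≤ (y)^17 := by positivity
      have hubs018 : (y)^18 ≤ (1665654994060189378680533192121882445201/1000000000000000000000000000000000000000000000000000000) := by
        calc (y)^18 ≤ ((151/1000))^18 := pow_le_pow_left₀ hy0.le hds0 18
          _ = (1665654994060189378680533192121882445201/1000000000000000000000000000000000000000000000000000000) := by norm_num
      have hlbs018 : (0:ℝ) ≤ (y)^18 := by positivity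
      linarith
    have hBBs : (y) ≤ ((171/1000):ℝ) := by linarith
    have hAAs1 : ((151/1000):ℝ) ≤ (y) := by linarith
    have hubs11 : (y)^1 ≤ (171/1000) := by
      calc (y)^1 ≤ ((171/1000))^1 := pow_le_pow_left₀ hy0.le hBBs 1
        _ = (171/1000) := by norm_num
    have hlbs11 : ((151/1000):ℝ) ≤ (y)^1 := by
      calc ((151/1000):ℝ) = ((151/1000))^1 := by norm_num
        _ ≤ (y)^1 := pow_le_pow_left₀ (by norm_num) hAAs1 1
    have hubs12 : (y)^2 ≤ (29241/1000000) := by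
      calc (y)^2 ≤ ((171/1000))^2 := pow_le_pow_left₀ hy0.le hBBs 2
        _ = (29241/1000000) := by norm_num
    have hlbs12 : ((22801/1000000):ℝ) ≤ (y)^2 := by
      calc ((22801/1000000):ℝ) = ((151/1000))^2 := by norm_num
        _ ≤ (y)^2 := pow_le_pow_left₀ (by norm_num) hAAs1 2
    have hubs13 : (y)^3 ≤ (5000211/1000000000) := by
      calc (y)^3 ≤ ((171/1000))^3 := pow_le_pow_left₀ hy0.le hBBs 3
        _ = (5000211/1000000000) := by norm_num
    have hlbs13 : ((3442951/1000000000):ℝ) ≤ (y)^3 := by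
      calc ((3442951/1000000000):ℝ) = ((151/1000))^3 := by norm_num
        _ ≤ (y)^3 := pow_le_pow_left₀ (by norm_num) hAAs1 3
    have hubs14 : (y)^4 ≤ (855036081/1000000000000) := by
      calc (y)^4 ≤ ((171/1000))^4 := pow_le_pow_left₀ hy0.le hBBs 4
        _ = (855036081/1000000000000) := by norm_num
    have hlbs14 : ((519885601/1000000000000):ℝ) ≤ (y)^4 := by
      calc ((519885601/1000000000000):ℝ) = ((151/1000))^4 := by norm_num
        _ ≤ (y)^4 := pow_le_pow_left₀ (by norm_num) hAAs1 4
    have hubs15 : (y)^5 ≤ (146211169851/1000000000000000) := by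
      calc (y)^5 ≤ ((171/1000))^5 := pow_le_pow_left₀ hy0.le hBBs 5
        _ = (146211169851/1000000000000000) := by norm_num
    have hlbs15 : ((78502725751/1000000000000000):ℝ) ≤ (y)^5 := by
      calc ((78502725751/1000000000000000):ℝ) = ((151/1000))^5 := by norm_num
        _ ≤ (y)^5 := pow_le_pow_left₀ (by norm_num) hAAs1 5
    have hubs16 : (y)^6 ≤ (25002110044521/1000000000000000000) := by
      calc (y)^6 ≤ ((171/1000))^6 := pow_le_pow_left₀ hy0.le hBBs 6
        _ = (25002110044521/1000000000000000000) := by norm_num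
    have hlbs16 : ((11853911588401/1000000000000000000):ℝ) ≤ (y)^6 := by
      calc ((11853911588401/1000000000000000000):ℝ) = ((151/1000))^6 := by norm_num
        _ ≤ (y)^6 := pow_le_pow_left₀ (by norm_num) hAAs1 6
    have hubs17 : (y)^7 ≤ (4275360817613091/1000000000000000000000) := by
      calc (y)^7 ≤ ((171/1000))^7 := pow_le_pow_left₀ hy0.le hBBs 7
        _ = (4275360817613091/1000000000000000000000) := by norm_num
    have hlbs17 : ((1789940649848551/1000000000000000000000):ℝ) ≤ (y)^7 := by
      calc ((1789940649848551/1000000000000000000000):ℝ) = ((151/1000))^7 := by norm_num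
        _ ≤ (y)^7 := pow_le_pow_left₀ (by norm_num) hAAs1 7
    have hubs18 : (y)^8 ≤ (731086699811838561/1000000000000000000000000) := by
      calc (y)^8 ≤ ((171/1000))^8 := pow_le_pow_left₀ hy0.le hBBs 8
        _ = (731086699811838561/1000000000000000000000000) := by norm_num
    have hlbs18 : ((270281038127131201/1000000000000000000000000):ℝ) ≤ (y)^8 := by
      calc ((270281038127131201/1000000000000000000000000):ℝ) = ((151/1000))^8 := by norm_num
        _ ≤ (y)^8 := pow_le_pow_left₀ (by norm_num) hAAs1 8
    have hubs19 : (y)^9 ≤ (125015825667824393931/1000000000000000000000000000) := by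
      calc (y)^9 ≤ ((171/1000))^9 := pow_le_pow_left₀ hy0.le hBBs 9
        _ = (125015825667824393931/1000000000000000000000000000) := by norm_num
    have hlbs19 : ((40812436757196811351/1000000000000000000000000000):ℝ) ≤ (y)^9 := by
      calc ((40812436757196811351/1000000000000000000000000000):ℝ) = ((151/1000))^9 := by norm_num
        _ ≤ (y)^9 := pow_le_pow_left₀ (by norm_num) hAAs1 9
    have hubs110 : (y)^10 ≤ (21377706189197971362201/1000000000000000000000000000000) := by
      calc (y)^10 ≤ ((171/1000))^10 := pow_le_pow_left₀ hy0.le hBBs 10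
        _ = (21377706189197971362201/1000000000000000000000000000000) := by norm_num
    have hlbs110 : ((6162677950336718514001/1000000000000000000000000000000):ℝ) ≤ (y)^10 := by
      calc ((6162677950336718514001/1000000000000000000000000000000):ℝ) = ((151/1000))^10 := by norm_num
        _ ≤ (y)^10 := pow_le_pow_left₀ (by norm_num) hAAs1 10
    have hubs111 : (y)^11 ≤ (3655587758352853102936371/1000000000000000000000000000000000) := by
      calc (y)^11 ≤ ((171/1000))^11 := pow_le_pow_left₀ hy0.le hBBs 11
        _ = (3655587758352853102936371/1000000000000000000000000000000000) := by norm_num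
    have hlbs111 : ((930564370500844495614151/1000000000000000000000000000000000):ℝ) ≤ (y)^11 := by
      calc ((930564370500844495614151/1000000000000000000000000000000000):ℝ) = ((151/1000))^11 := by norm_num
        _ ≤ (y)^11 := pow_le_pow_left₀ (by norm_num) hAAs1 11
    have hubs112 : (y)^12 ≤ (625105506678337880602119441/1000000000000000000000000000000000000) := by
      calc (y)^12 ≤ ((171/1000))^12 := pow_le_pow_left₀ hy0.le hBBs 12
        _ = (625105506678337880602119441/1000000000000000000000000000000000000) := by norm_num
    have hlbs112 : ((140515219945627518837736801/1000000000000000000000000000000000000):ℝ) ≤ (y)^12 := by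
      calc ((140515219945627518837736801/1000000000000000000000000000000000000):ℝ) = ((151/1000))^12 := by norm_num
        _ ≤ (y)^12 := pow_le_pow_left₀ (by norm_num) hAAs1 12
    have hubs113 : (y)^13 ≤ (106893041641995777582962424411/1000000000000000000000000000000000000000) := by
      calc (y)^13 ≤ ((171/1000))^13 := pow_le_pow_left₀ hy0.le hBBs 13
        _ = (106893041641995777582962424411/1000000000000000000000000000000000000000) := by norm_num
    have hlbs113 : ((21217798211789755344498256951/1000000000000000000000000000000000000000):ℝ) ≤ (y)^13 := by
      calc ((21217798211789755344498256951/1000000000000000000000000000000000000000):ℝ) = ((151/1000))^13 := by norm_num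
        _ ≤ (y)^13 := pow_le_pow_left₀ (by norm_num) hAAs1 13
    have hubs114 : (y)^14 ≤ (18278710120781277966686574574281/1000000000000000000000000000000000000000000) := by
      calc (y)^14 ≤ ((171/1000))^14 := pow_le_pow_left₀ hy0.le hBBs 14
        _ = (18278710120781277966686574574281/1000000000000000000000000000000000000000000) := by norm_num
    have hlbs114 : ((3203887529980253057019236799601/1000000000000000000000000000000000000000000):ℝ) ≤ (y)^14 := by
      calc ((3203887529980253057019236799601/1000000000000000000000000000000000000000000):ℝ) = ((151/1000))^14 := by norm_num
        _ ≤ (y)^14 := pow_le_pow_left₀ (by norm_num) hAAs1 14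
    have hubs115 : (y)^15 ≤ (3125659430653598532303404252202051/1000000000000000000000000000000000000000000000) := by
      calc (y)^15 ≤ ((171/1000))^15 := pow_le_pow_left₀ hy0.le hBBs 15
        _ = (3125659430653598532303404252202051/1000000000000000000000000000000000000000000000) := by norm_num
    have hlbs115 : ((483787017027018211609904756739751/1000000000000000000000000000000000000000000000):ℝ) ≤ (y)^15 := by
      calc ((483787017027018211609904756739751/1000000000000000000000000000000000000000000000):ℝ) = ((151/1000))^15 := by norm_num
        _ ≤ (y)^15 := pow_le_pow_left₀ (by norm_num) hAAs1 15
    have hubs116 : (y)^16 ≤ (534487762641765349023882127126550721/1000000000000000000000000000000000000000000000000) := by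
      calc (y)^16 ≤ ((171/1000))^16 := pow_le_pow_left₀ hy0.le hBBs 16
        _ = (534487762641765349023882127126550721/1000000000000000000000000000000000000000000000000) := by norm_num
    have hlbs116 : ((73051839571079749953095618267702401/1000000000000000000000000000000000000000000000000):ℝ) ≤ (y)^16 := by
      calc ((73051839571079749953095618267702401/1000000000000000000000000000000000000000000000000):ℝ) = ((151/1000))^16 := by norm_num
        _ ≤ (y)^16 := pow_le_pow_left₀ (by norm_num) hAAs1 16
    have hubs117 : (y)^17 ≤ (91397407411741874683083843738640173291/1000000000000000000000000000000000000000000000000000) := by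
      calc (y)^17 ≤ ((171/1000))^17 := pow_le_pow_left₀ hy0.le hBBs 17
        _ = (91397407411741874683083843738640173291/1000000000000000000000000000000000000000000000000000) := by norm_num
    have hlbs117 : ((11030827775233042242917438358423062551/1000000000000000000000000000000000000000000000000000):ℝ) ≤ (y)^17 := by
      calc ((11030827775233042242917438358423062551/1000000000000000000000000000000000000000000000000000):ℝ) = ((151/1000))^17 := by norm_num
        _ ≤ (y)^17 := pow_le_pow_left₀ (by norm_num) hAAs1 17
    have hubs118 : (y)^18 ≤ (15628956667407860570807337279307469632761/1000000000000000000000000000000000000000000000000000000) := by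
      calc (y)^18 ≤ ((171/1000))^18 := pow_le_pow_left₀ hy0.le hBBs 18
        _ = (15628956667407860570807337279307469632761/1000000000000000000000000000000000000000000000000000000) := by norm_num
    have hlbs118 : ((1665654994060189378680533192121882445201/1000000000000000000000000000000000000000000000000000000):ℝ) ≤ (y)^18 := by
      calc ((1665654994060189378680533192121882445201/1000000000000000000000000000000000000000000000000000000):ℝ) = ((151/1000))^18 := by norm_num
        _ ≤ (y)^18 := pow_le_pow_left₀ (by norm_num) hAAs1 18
    linarith
  have hkey : y*((3141593/1000000 - y)*((4728/1000000)*(15707965/10000000 - y)^2 + 180127/10000000)*(15707965/10000000 - y)^3*(1 - y^2/2 + y^4/24)^3) < (y - y^3/6)*AL := by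
    have hyBR : y*BR = (y - y^3/6)*AL - y*((3141593/1000000 - y)*((4728/1000000)*(15707965/10000000 - y)^2 + 180127/10000000)*(15707965/10000000 - y)^3*(1 - y^2/2 + y^4/24)^3) := by rw [hBRdef]; ring
    linarith [mul_pos hy0 hBRpos, hyBR]
  have hP4 : y*((π - y)*(((224 - 8*π^2)/(315*π^4))*x^2 + 8/(45*π^2))*x^3*(sin x)^3) ≤ y*((3141593/1000000 - y)*((4728/1000000)*(15707965/10000000 - y)^2 + 180127/10000000)*(15707965/10000000 - y)^3*(1 - y^2/2 + y^4/24)^3) :=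
    mul_le_mul_of_nonneg_left P3 hy0.le
  have hPδ : (2/45 - 2/315*x^2 - ((224 - 8*π^2)/(315*π^4))*x^4)*x^3*(sin x)^3
      = y*((π - y)*(((224 - 8*π^2)/(315*π^4))*x^2 + 8/(45*π^2))*x^3*(sin x)^3) := by
    rw [hid, hy]
    ring
  have hGid : x^2*cos x + x*(cos x)^2*sin x - 2*(sin x)^2*cos x
      = cos x*(x^2 + x*(cos x*sin x) - 2*(sin x)^2) := by ring
  rw [hPδ, hGid]
  calc y*((π - y)*(((224 - 8*π^2)/(315*π^4))*x^2 + 8/(45*π^2))*x^3*(sin x)^3)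
      ≤ y*((3141593/1000000 - y)*((4728/1000000)*(15707965/10000000 - y)^2 + 180127/10000000)*(15707965/10000000 - y)^3*(1 - y^2/2 + y^4/24)^3) := hP4
    _ < (y - y^3/6)*AL := hkey
    _ ≤ cos x*(x^2 + x*(cos x*sin x) - 2*(sin x)^2) := hcA


end W17

theorem stmt_17 (x : ℝ) (h1 : 0 < x) (h2 : x < π / 2) :
    2 + (2 / 45 - (2 / 315) * x ^ 2 - ((224 - 8 * π ^ 2) / (315 * π ^ 4)) * x ^ 4) * x ^ 3 * tan x <
      (x / sin x) ^ 2 + x / tan x ∧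
    (x / sin x) ^ 2 + x / tan x <
      2 + (2 / 45 - (2 / 315) * x ^ 2 - (4 / 1575) * x ^ 4) * x ^ 3 * tan x := by
  have hp1 : (3141592/1000000:ℝ) < π := by
    have := Real.pi_gt_d6; norm_num at this ⊢; linarith
  have hp2 : π < (3141593/1000000:ℝ) := by
    have := Real.pi_lt_d6; norm_num at this ⊢; linarith
  have hs0 : 0 < sin x := Real.sin_pos_of_pos_of_lt_pi h1 (by linarith)
  have hc0 : 0 < cos x := Real.cos_pos_of_mem_Ioo ⟨by linarith, h2⟩
  have hsne : sin x ≠ 0 := ne_of_gt hs0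
  have hcne : cos x ≠ 0 := ne_of_gt hc0
  have hden : (0:ℝ) < (sin x)^2 * cos x := mul_pos (pow_pos hs0 2) hc0
  have hU := W17.L1 x h1 (by linarith) hs0 hc0.le
  have hL : (2/45 - 2/315*x^2 - ((224 - 8*π^2)/(315*π^4))*x^4) * x^3 * (sin x)^3
      < x^2*cos x + x*(cos x)^2*sin x - 2*(sin x)^2*cos x := by
    rcases le_or_gt x (14/10) with hx14|hx14
    · have hpi2b : π^2 ≤ (98696066/10000000:ℝ) := by nlinarith
      have hpi4b : π^4 ≤ (97409136/1000000:ℝ) := by nlinarith [hpi2b, sq_nonneg (π^2), Real.pi_pos]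
      have hαlo : (4726/1000000:ℝ) ≤ (224 - 8*π^2)/(315*π^4) := by
        rw [le_div_iff₀ (by positivity)]
        nlinarith [hpi2b, hpi4b]
      have h2' := W17.L2 x h1 hx14 hs0 hc0.le
      have hss : (0:ℝ) ≤ x^4*(x^3*(sin x)^3) := by positivity
      have hmono := mul_le_mul_of_nonneg_right hαlo hss
      nlinarith [h2', hmono]
    · exact W17.L3 x hx14.le h2
  constructor
  · rw [← sub_pos]
    have hE : (x / sin x) ^ 2 + x / tan x - (2 + (2 / 45 - (2 / 315) * x ^ 2 - ((224 - 8 * π ^ 2) / (315 * π ^ 4)) * x ^ 4) * x ^ 3 * tan x)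
        = (x^2*cos x + x*(cos x)^2*sin x - 2*(sin x)^2*cos x
            - (2/45 - 2/315*x^2 - ((224 - 8*π^2)/(315*π^4))*x^4) * x^3 * (sin x)^3)
          / ((sin x)^2 * cos x) := by
      rw [Real.tan_eq_sin_div_cos]
      field_simp
      ring
    rw [hE]
    exact div_pos (by linarith [hL]) hden
  · rw [← sub_pos]
    have hE : (2 + (2 / 45 - (2 / 315) * x ^ 2 - (4 / 1575) * x ^ 4) * x ^ 3 * tan x) - ((x / sin x) ^ 2 + x / tan x)
        = ((2/45 - 2/315*x^2 - 4/1575*x^4) * x^3 * (sin x)^3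
            - (x^2*cos x + x*(cos x)^2*sin x - 2*(sin x)^2*cos x))
          / ((sin x)^2 * cos x) := by
      rw [Real.tan_eq_sin_div_cos]
      field_simp
      ring
    rw [hE]
    exact div_pos (by linarith [hU]) hden
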